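/- Strong subsets absorb 0-extensions: let C ⊆ D be finite sets of vertices of a simple graph G with C ≼ D, let X ⊆ C, and suppose (X,Z) is a 0-extension with Z ⊆ D. Then Z ⊆ C. -/

import Mathlib

/-- The number of edges of `G` with both endpoints in the finite set `s`. -/
noncomputable def eCount {V : Type*} (G : SimpleGraph V) (s : Finset V) : ℕ :=
  {e : Sym2 V | e ∈ G.edgeSet ∧ ∀ v ∈ e, v ∈ s}.ncard

/-- The rational predimension `δ_r(s) = |s| - r·e(s)`. -/
noncomputable def pdimQ {V : Type*} (G : SimpleGraph V) (r : ℚ) (s : Finset V) : ℚ :=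
  (s.card : ℚ) - r * (eCount G s : ℚ)

/-- `A ≼ B`: `A ⊆ B` and `δ_r(B₀) > δ_r(A)` for every `B₀` with `A ⊊ B₀ ⊆ B`. -/
def Strong {V : Type*} (G : SimpleGraph V) (r : ℚ) (A B : Finset V) : Prop :=
  A ⊆ B ∧ ∀ B₀ : Finset V, A ⊂ B₀ → B₀ ⊆ B → pdimQ G r A < pdimQ G r B₀

/-- `(X,Z)` is a minimal pair: `X ⊆ Z`, `X ⋠ Z`, but `X ≼ Z₀` for every
`Z₀` with `X ⊆ Z₀ ⊊ Z`. -/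
def MinPair {V : Type*} (G : SimpleGraph V) (r : ℚ) (X Z : Finset V) : Prop :=
  X ⊆ Z ∧ ¬ Strong G r X Z ∧ ∀ Z₀ : Finset V, X ⊆ Z₀ → Z₀ ⊂ Z → Strong G r X Z₀

/-- `(X,Z)` is a `0`-extension: there is a chain `X = X₀ ⊆ … ⊆ X_k = Z` in
which each `(X_i, X_{i+1})` is a minimal pair with `δ_r(X_{i+1}) = δ_r(X_i)`. -/
def ZeroExt {V : Type*} (G : SimpleGraph V) (r : ℚ) (X Z : Finset V) : Prop :=
  ∃ (k : ℕ) (f : ℕ → Finset V), f 0 = X ∧ f k = Z ∧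
    ∀ i < k, MinPair G r (f i) (f (i + 1)) ∧ pdimQ G r (f (i + 1)) = pdimQ G r (f i)

/-- The set of edges of `G` with both endpoints in `s`. -/
def edgesIn {V : Type*} (G : SimpleGraph V) (s : Finset V) : Set (Sym2 V) :=
  {e : Sym2 V | e ∈ G.edgeSet ∧ ∀ v ∈ e, v ∈ s}

lemma edgesIn_finite {V : Type*} (G : SimpleGraph V) (s : Finset V) :
    (edgesIn G s).Finite := by
  refine Set.Finite.subset (t := edgesIn G s) ((s.finite_toSet.prod s.finite_toSet).image
    (fun p : V × V => Sym2.mk p.1 p.2)) ?_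
  intro e he
  induction e using Sym2.ind with
  | _ a b =>
    exact ⟨(a, b), ⟨he.2 a (Sym2.mem_mk_left a b), he.2 b (Sym2.mem_mk_right a b)⟩, rfl⟩

lemma edgesIn_inter {V : Type*} [DecidableEq V] (G : SimpleGraph V) (A B : Finset V) :
    edgesIn G (A ∩ B) = edgesIn G A ∩ edgesIn G B := by
  ext e
  simp only [edgesIn, Set.mem_setOf_eq, Set.mem_inter_iff, Finset.mem_inter]
  constructor
  · rintro ⟨h1, h2⟩
    exact ⟨⟨h1, fun v hv => (h2 v hv).1⟩, ⟨h1, fun v hv => (h2 v hv).2⟩⟩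
  · rintro ⟨⟨h1, h2⟩, ⟨_, h3⟩⟩
    exact ⟨h1, fun v hv => ⟨h2 v hv, h3 v hv⟩⟩

lemma edgesIn_union_subset {V : Type*} [DecidableEq V] (G : SimpleGraph V) (A B : Finset V) :
    edgesIn G A ∪ edgesIn G B ⊆ edgesIn G (A ∪ B) := by
  rintro e (⟨h1, h2⟩ | ⟨h1, h2⟩)
  · exact ⟨h1, fun v hv => Finset.mem_union_left _ (h2 v hv)⟩
  · exact ⟨h1, fun v hv => Finset.mem_union_right _ (h2 v hv)⟩

lemma eCount_submod {V : Type*} [DecidableEq V] (G : SimpleGraph V) (A B : Finset V) :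
    eCount G A + eCount G B ≤ eCount G (A ∪ B) + eCount G (A ∩ B) := by
  have h1 : eCount G A + eCount G B =
      (edgesIn G A ∪ edgesIn G B).ncard + (edgesIn G A ∩ edgesIn G B).ncard :=
    (Set.ncard_union_add_ncard_inter _ _ (edgesIn_finite G A) (edgesIn_finite G B)).symm
  rw [show eCount G A = (edgesIn G A).ncard from rfl] at *
  rw [show eCount G B = (edgesIn G B).ncard from rfl] at *
  rw [h1]
  have h2 : (edgesIn G A ∪ edgesIn G B).ncard ≤ eCount G (A ∪ B) :=
    Set.ncard_le_ncard (edgesIn_union_subset G A B) (edgesIn_finite G _)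
  have h3 : (edgesIn G A ∩ edgesIn G B).ncard = eCount G (A ∩ B) := by
    rw [← edgesIn_inter]; rfl
  omega

lemma pdimQ_submod {V : Type*} [DecidableEq V] (G : SimpleGraph V) (r : ℚ)
    (hr0 : 0 ≤ r) (A B : Finset V) :
    pdimQ G r (A ∪ B) + pdimQ G r (A ∩ B) ≤ pdimQ G r A + pdimQ G r B := by
  have hcard : ((A ∪ B).card : ℚ) + ((A ∩ B).card : ℚ) = (A.card : ℚ) + (B.card : ℚ) := by
    exact_mod_cast congrArg (Nat.cast : ℕ → ℚ) (Finset.card_union_add_card_inter A B)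
  have he : (eCount G A : ℚ) + (eCount G B : ℚ) ≤
      (eCount G (A ∪ B) : ℚ) + (eCount G (A ∩ B) : ℚ) := by
    exact_mod_cast eCount_submod G A B
  have := mul_le_mul_of_nonneg_left he hr0
  unfold pdimQ
  ring_nf
  ring_nf at this hcard
  linarith

/-- A single zero-predimension minimal pair is absorbed by a strong subset. -/
lemma step_absorb {V : Type*} [DecidableEq V] (G : SimpleGraph V) (r : ℚ)
    (hr0 : 0 ≤ r) (C D X Z : Finset V) (hCD : C ⊆ D)
    (hstrong : Strong G r C D) (hXC : X ⊆ C)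
    (hmp : MinPair G r X Z) (heq : pdimQ G r Z = pdimQ G r X) (hZD : Z ⊆ D) :
    Z ⊆ C := by
  by_contra h
  obtain ⟨z, hzZ, hzC⟩ := Finset.not_subset.mp h
  have hXZ := hmp.1
  have hsub : X ⊆ Z ∩ C := Finset.subset_inter hXZ hXC
  have hneq : Z ∩ C ≠ Z := fun he => h (Finset.inter_eq_left.mp he)
  have hss : Z ∩ C ⊂ Z := Finset.ssubset_iff_subset_ne.mpr ⟨Finset.inter_subset_left, hneq⟩
  have hstr := hmp.2.2 (Z ∩ C) hsub hss
  have hXle : pdimQ G r X ≤ pdimQ G r (Z ∩ C) := by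
    rcases eq_or_ne X (Z ∩ C) with h' | h'
    · rw [h']
    · exact le_of_lt (hstr.2 (Z ∩ C)
        (Finset.ssubset_iff_subset_ne.mpr ⟨hsub, h'⟩) subset_rfl)
  have hCss : C ⊂ Z ∪ C := by
    refine Finset.ssubset_iff_subset_ne.mpr ⟨Finset.subset_union_right, fun he => ?_⟩
    exact hzC (he ▸ Finset.mem_union_left C hzZ)
  have hlt : pdimQ G r C < pdimQ G r (Z ∪ C) :=
    hstrong.2 (Z ∪ C) hCss (Finset.union_subset hZD hCD)
  have hsm := pdimQ_submod G r hr0 Z C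
  linarith

/-- Strong subsets absorb `0`-extensions. -/
theorem strong_absorbs_zeroExt {V : Type*} (G : SimpleGraph V) (r : ℚ)
    (hr0 : 0 < r) (hr1 : r < 1) (C D X Z : Finset V)
    (hCD : C ⊆ D) (hstrong : Strong G r C D) (hXC : X ⊆ C)
    (hZ : ZeroExt G r X Z) (hZD : Z ⊆ D) :
    Z ⊆ C := by
  classical
  obtain ⟨k, f, h0, hk, hsteps⟩ := hZ
  -- each f j with j ≤ k is contained in f k = Z
  have hchain : ∀ m, m ≤ k → f (k - m) ⊆ f k := by
    intro m
    induction m with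
    | zero => intro _; simp
    | succ n ih =>
      intro hle
      have h1 : k - (n + 1) < k := by omega
      have h2 : k - (n + 1) + 1 = k - n := by omega
      have := (hsteps (k - (n + 1)) h1).1.1
      rw [h2] at this
      exact this.trans (ih (by omega))
  have hsubZ : ∀ j, j ≤ k → f j ⊆ Z := by
    intro j hj
    have := hchain (k - j) (by omega)
    rw [show k - (k - j) = j by omega] at this
    exact hk ▸ this
  -- main induction
  have key : ∀ i, i ≤ k → f i ⊆ C := by
    intro i
    induction i with
    | zero => intro _; rw [h0]; exact hXC
    | succ n ih =>
      intro hle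
      have hn := ih (by omega)
      obtain ⟨hmp, heq⟩ := hsteps n (by omega)
      exact step_absorb G r hr0.le C D (f n) (f (n + 1)) hCD hstrong hn hmp heq
        ((hsubZ (n + 1) hle).trans hZD)
  rw [← hk]
  exact key k le_rfl
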